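/- Let M = (S, A, P) be an MDP with countable state set, π a stationary policy, F ⊆ S a target set, and s ∈ S. For every horizon T ∈ ℕ, the recursively defined bounded-horizon reachability probability equals the path-measure probability of reaching F within T steps: ℙ^s_{M,π}(◇_{≤T} F) = ℙ^s_{M,π}({ω ∈ S^ℕ : ∃ t ≤ T, ω_t ∈ F}), where the right-hand side is the measure, under the Markov path measure induced by π and P from initial state s, of the set of infinite state sequences visiting F within the first T steps. -/

import Mathlib

open scoped Classical ENNReal
open MeasureTheory

structure MDP (S A : Type*) where
  P : S → A → PMF S

/-- The Markov transition kernel `Q(s,s') = ∑_{a} π(s,a) P(s,a,s')` induced by a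
stationary policy. -/
noncomputable def stepKernel {S A : Type*} (M : MDP S A) (π : S → PMF A) (s s' : S) :
    ℝ≥0∞ :=
  ∑' a, π s a * M.P s a s'

/-- The cylinder set of a finite path fragment, given as a list of states: all infinite
state sequences whose initial entries agree with the list. -/
def listCyl {S : Type*} (l : List S) : Set (ℕ → S) :=
  {ω | ∀ t x, l[t]? = some x → ω t = x}

/-- The probability weight `∏_{i<m} Q(s_i, s_{i+1})` of a finite path fragment. -/
noncomputable def listWeight {S : Type*} (Q : S → S → ℝ≥0∞) : List S → ℝ≥0∞
  | [] => 1
  | [_] => 1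
  | s :: s' :: rest => Q s s' * listWeight Q (s' :: rest)

/-- The set `Γ` of finite path fragments of positive probability from `s0` whose final
state is the first state belonging to `G`. -/
def firstVisitFrags {S : Type*} (Q : S → S → ℝ≥0∞) (s0 : S) (G : Set S) :
    Set (List S) :=
  {l | l.head? = some s0 ∧ l.Chain' (fun s s' => 0 < Q s s') ∧
    (∃ x, l.getLast? = some x ∧ x ∈ G) ∧
    (∀ t x, l[t]? = some x → t + 1 < l.length → x ∉ G)}

/-- The reward process `R_c`: reward `1` at the first time `t ≤ T` at which the state
belongs to `F`, and `0` at all other times. -/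
noncomputable def firstRewards {S : Type*} (F : Set S) (T : ℕ) (ω : ℕ → S) (t : ℕ) :
    ℝ≥0∞ :=
  if t ≤ T ∧ ω t ∈ F ∧ ∀ i < t, ω i ∉ F then 1 else 0

/-- Bounded-horizon reachability probability `ℙ^s_{M,π}(◇_{≤T} F)`, defined recursively. -/
noncomputable def reachProb {S A : Type*} (M : MDP S A) (π : S → PMF A) (F : Set S) :
    ℕ → S → ℝ≥0∞
  | 0, s => if s ∈ F then 1 else 0
  | T + 1, s =>
      if s ∈ F then 1 else ∑' a, π s a * ∑' s', M.P s a s' * reachProb M π F T s'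

namespace ReachAux

variable {S : Type*}

/-- Fragments: paths from `s` of length `≤ T+1` hitting `F` exactly at the final state. -/
def Frag (F : Set S) (s : S) (T : ℕ) : Set (List S) :=
  {l | l.head? = some s ∧ l.length ≤ T + 1 ∧ (∃ x, l.getLast? = some x ∧ x ∈ F) ∧
    ∀ t x, l[t]? = some x → t + 1 < l.length → x ∉ F}

lemma frag_of_mem {F : Set S} {s : S} (hs : s ∈ F) (T : ℕ) :
    Frag F s T = {[s]} := by
  ext l
  constructor
  · rintro ⟨h1, h2, h3, h4⟩
    match l with
    | [] => simp at h1
    | [x] => simp_all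
    | x :: y :: r =>
      simp only [List.head?_cons, Option.some.injEq] at h1
      exact absurd (h1 ▸ hs) (h4 0 x (by simp) (by simp))
  · rintro rfl
    exact ⟨rfl, by simp, ⟨s, rfl, hs⟩, fun t x hx ht => by simp at ht⟩

lemma frag_zero {F : Set S} {s : S} (hs : s ∉ F) :
    Frag F s 0 = ∅ := by
  ext l
  simp only [Set.mem_empty_iff_false, iff_false]
  rintro ⟨h1, h2, ⟨x, hx, hxF⟩, h4⟩
  match l with
  | [] => simp at h1
  | [y] =>
    simp only [List.head?_cons, Option.some.injEq] at h1
    simp only [List.getLast?_singleton, Option.some.injEq] at hx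
    exact hs (h1 ▸ hx ▸ hxF)
  | y :: z :: r => simp at h2

lemma cons_mem_frag {F : Set S} {s : S} (hs : s ∉ F) {T : ℕ} {l : List S} :
    s :: l ∈ Frag F s (T + 1) ↔ ∃ s', l.head? = some s' ∧ l ∈ Frag F s' T := by
  constructor
  · rintro ⟨h1, h2, ⟨x, hx, hxF⟩, h4⟩
    match l with
    | [] =>
      simp only [List.getLast?_singleton, Option.some.injEq] at hx
      exact absurd (hx ▸ hxF) hs
    | y :: r =>
      refine ⟨y, rfl, rfl, ?_, ⟨x, ?_, hxF⟩, ?_⟩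
      · simpa using Nat.le_of_succ_le_succ (by simpa using h2)
      · rwa [List.getLast?_cons_cons] at hx
      · intro t z hz ht
        exact h4 (t + 1) z (by simpa using hz) (by simpa using Nat.succ_lt_succ ht)
  · rintro ⟨s', hh, h1, h2, ⟨x, hx, hxF⟩, h4⟩
    have hne : l ≠ [] := by rintro rfl; simp at h1
    refine ⟨rfl, by simpa using Nat.succ_le_succ h2, ⟨x, ?_, hxF⟩, ?_⟩
    · rw [show s :: l = s :: l from rfl]
      match l, hne with
      | y :: r, _ => rwa [List.getLast?_cons_cons]
    · intro t z hz ht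
      match t with
      | 0 =>
        simp only [List.getElem?_cons_zero, Option.some.injEq] at hz
        exact hz ▸ hs
      | t + 1 =>
        exact h4 t z (by simpa using hz)
          (by simpa using Nat.lt_of_succ_lt_succ ht)

lemma listWeight_cons {Q : S → S → ℝ≥0∞} {s s' : S} {l : List S}
    (h : l.head? = some s') :
    listWeight Q (s :: l) = Q s s' * listWeight Q l := by
  match l with
  | [] => simp at h
  | x :: r =>
    simp only [List.head?_cons, Option.some.injEq] at h
    subst h; rfl

noncomputable def fragSum (Q : S → S → ℝ≥0∞) (F : Set S) (T : ℕ) (s : S) : ℝ≥0∞ :=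
  ∑' l : List S, Set.indicator (Frag F s T) (listWeight Q) l

lemma fragSum_of_mem {Q : S → S → ℝ≥0∞} {F : Set S} {s : S} (hs : s ∈ F) (T : ℕ) :
    fragSum Q F T s = 1 := by
  unfold fragSum
  rw [frag_of_mem hs]
  rw [tsum_eq_single ([s] : List S)]
  · simp [Set.indicator_of_mem, listWeight]
  · intro l hl
    exact Set.indicator_of_notMem (by simpa using hl) (listWeight Q)

lemma fragSum_zero {Q : S → S → ℝ≥0∞} {F : Set S} {s : S} (hs : s ∉ F) :
    fragSum Q F 0 s = 0 := by
  unfold fragSum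
  rw [frag_zero hs]
  simp

lemma fragSum_succ {Q : S → S → ℝ≥0∞} {F : Set S} {s : S} (hs : s ∉ F) (T : ℕ) :
    fragSum Q F (T + 1) s = ∑' s', Q s s' * fragSum Q F T s' := by
  have key : ∀ l : List S,
      ∑' s' : S, Q s s' * Set.indicator (Frag F s' T) (listWeight Q) l
        = Set.indicator (Frag F s (T + 1)) (listWeight Q) (s :: l) := by
    intro l
    match l with
    | [] =>
      have h1 : ∀ s' : S,
          Set.indicator (Frag F s' T) (listWeight Q) ([] : List S) = 0 := by
        intro s'
        apply Set.indicator_of_notMem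
        rintro ⟨h, -⟩; simp at h
      have h2 : ([s] : List S) ∉ Frag F s (T + 1) := by
        rintro ⟨-, -, ⟨x, hx, hxF⟩, -⟩
        simp only [List.getLast?_singleton, Option.some.injEq] at hx
        exact hs (hx ▸ hxF)
      simp [h1, Set.indicator_of_notMem h2]
    | y :: r =>
      rw [tsum_eq_single y]
      · by_cases hmem : (y :: r) ∈ Frag F y T
        · rw [Set.indicator_of_mem hmem,
            Set.indicator_of_mem ((cons_mem_frag hs).mpr ⟨y, List.head?_cons, hmem⟩),
            listWeight_cons (l := y :: r) List.head?_cons]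
        · rw [Set.indicator_of_notMem hmem, Set.indicator_of_notMem, mul_zero]
          intro hc
          obtain ⟨s', hh, hmem'⟩ := (cons_mem_frag hs).mp hc
          simp only [List.head?_cons, Option.some.injEq] at hh
          exact hmem (hh ▸ hmem')
      · intro s' hs'
        rw [Set.indicator_of_notMem, mul_zero]
        rintro ⟨hh, -⟩
        simp only [List.head?_cons, Option.some.injEq] at hh
        exact hs' hh.symm
  calc fragSum Q F (T + 1) s
      = ∑' l : List S,
          Set.indicator (Frag F s (T + 1)) (listWeight Q) (s :: l) := by
        refine (Function.Injective.tsum_eq (fun a b h => by simpa using h) ?_).symm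
        intro l hl
        have hmem : l ∈ Frag F s (T + 1) := by
          by_contra hc
          exact hl (Set.indicator_of_notMem hc _)
        obtain ⟨h1, -⟩ := hmem
        match l with
        | x :: r =>
          simp only [List.head?_cons, Option.some.injEq] at h1
          exact ⟨r, by rw [h1]⟩
    _ = ∑' (l : List S) (s' : S),
          Q s s' * Set.indicator (Frag F s' T) (listWeight Q) l :=
        tsum_congr fun l => (key l).symm
    _ = ∑' (s' : S) (l : List S),
          Q s s' * Set.indicator (Frag F s' T) (listWeight Q) l := ENNReal.tsum_comm
    _ = ∑' s', Q s s' * fragSum Q F T s' := by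
        exact tsum_congr fun s' => ENNReal.tsum_mul_left


lemma reachProb_eq_fragSum {S A : Type*} (M : MDP S A) (π : S → PMF A) (F : Set S) :
    ∀ T s, reachProb M π F T s = fragSum (stepKernel M π) F T s := by
  intro T
  induction T with
  | zero =>
    intro s
    by_cases hs : s ∈ F
    · simp [reachProb, hs, fragSum_of_mem hs]
    · simp [reachProb, hs, fragSum_zero hs]
  | succ T ih =>
    intro s
    by_cases hs : s ∈ F
    · simp [reachProb, hs, fragSum_of_mem hs]
    · rw [fragSum_succ hs]
      simp only [reachProb, if_neg hs]
      calc ∑' a, π s a * ∑' s', M.P s a s' * reachProb M π F T s'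
          = ∑' (a : A) (s' : S), π s a * (M.P s a s' * reachProb M π F T s') :=
            tsum_congr fun a => ENNReal.tsum_mul_left.symm
        _ = ∑' (s' : S) (a : A), π s a * M.P s a s' * reachProb M π F T s' := by
            rw [ENNReal.tsum_comm]
            exact tsum_congr fun s' => tsum_congr fun a => (mul_assoc _ _ _).symm
        _ = ∑' s', (∑' a, π s a * M.P s a s') * reachProb M π F T s' :=
            tsum_congr fun s' => ENNReal.tsum_mul_right
        _ = ∑' s', stepKernel M π s s' * fragSum (stepKernel M π) F T s' :=
            tsum_congr fun s' => by rw [stepKernel, ih s']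

lemma ofFn_getElem?_of_lt {α : Type*} {n : ℕ} (f : Fin n → α) {i : ℕ} (h : i < n) :
    (List.ofFn f)[i]? = some (f ⟨i, h⟩) := by
  rw [List.getElem?_ofFn]
  simp [h]

lemma ofFn_getElem?_eq_some {α : Type*} {n : ℕ} {f : Fin n → α} {i : ℕ} {x : α}
    (h : (List.ofFn f)[i]? = some x) : ∃ hi : i < n, x = f ⟨i, hi⟩ := by
  rw [List.getElem?_ofFn] at h
  split at h
  · exact ⟨‹_›, (Option.some_injective _ h).symm⟩
  · simp at h

section Meas

set_option linter.unusedSectionVars false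
variable [Countable S] [MeasurableSpace S] [MeasurableSingletonClass S]

lemma measurableSet_listCyl (l : List S) : MeasurableSet (listCyl l) := by
  have h : listCyl l = ⋂ (t : ℕ) (x : S) (_ : l[t]? = some x),
      (fun ω : ℕ → S => ω t) ⁻¹' {x} := by
    ext ω
    simp [listCyl, Set.mem_iInter]
  rw [h]
  exact MeasurableSet.iInter fun t => MeasurableSet.iInter fun x =>
    MeasurableSet.iInter fun _ => (measurable_pi_apply t) (measurableSet_singleton x)

lemma listCyl_singleton (s : S) : listCyl [s] = {ω : ℕ → S | ω 0 = s} := by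
  ext ω
  constructor
  · intro h
    exact h 0 s rfl
  · intro h t x hx
    match t with
    | 0 =>
      simp only [List.getElem?_cons_zero, Option.some.injEq] at hx
      exact hx ▸ h
    | t + 1 => simp at hx

lemma iUnion_frag (F : Set S) (s : S) (T : ℕ) :
    (⋃ l ∈ Frag F s T, listCyl l)
      = {ω : ℕ → S | ∃ t ≤ T, ω t ∈ F} ∩ {ω : ℕ → S | ω 0 = s} := by
  ext ω
  simp only [Set.mem_iUnion, Set.mem_inter_iff, Set.mem_setOf_eq]
  constructor
  · rintro ⟨l, ⟨h1, h2, ⟨x, hx, hxF⟩, h4⟩, hω⟩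
    have hne : l ≠ [] := by rintro rfl; simp at h1
    have hpos : 0 < l.length := List.length_pos_iff.mpr hne
    rw [List.getLast?_eq_getElem?] at hx
    refine ⟨⟨l.length - 1, by omega, ?_⟩, ?_⟩
    · rw [hω (l.length - 1) x hx]; exact hxF
    · exact hω 0 s (by rwa [← List.head?_eq_getElem?])
  · rintro ⟨⟨t, htT, htF⟩, h0⟩
    have hex : ∃ t, ω t ∈ F := ⟨t, htF⟩
    have ht0t : Nat.find hex ≤ t := Nat.find_min' hex htF
    refine ⟨List.ofFn (fun i : Fin (Nat.find hex + 1) => ω i), ⟨?_, ?_, ?_, ?_⟩, ?_⟩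
    · rw [List.head?_eq_getElem?, ofFn_getElem?_of_lt _ (Nat.succ_pos _)]
      exact congrArg some h0
    · simp only [List.length_ofFn]
      omega
    · refine ⟨ω (Nat.find hex), ?_, Nat.find_spec hex⟩
      rw [List.getLast?_eq_getElem?, List.length_ofFn, Nat.add_sub_cancel,
        ofFn_getElem?_of_lt _ (Nat.lt_succ_self _)]
    · intro t' x hx ht'
      obtain ⟨hi, rfl⟩ := ofFn_getElem?_eq_some hx
      simp only [List.length_ofFn] at ht'
      have hlt : t' < Nat.find hex := by omega
      exact Nat.find_min hex hlt
    · intro t' x hx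
      obtain ⟨hi, rfl⟩ := ofFn_getElem?_eq_some hx
      rfl

lemma frag_pairwiseDisjoint (F : Set S) (s : S) (T : ℕ) :
    (Frag F s T).PairwiseDisjoint listCyl := by
  have aux : ∀ l₁ ∈ Frag F s T, ∀ l₂ ∈ Frag F s T, l₁.length < l₂.length →
      ∀ ω, ω ∈ listCyl l₁ → ω ∈ listCyl l₂ → False := by
    rintro l₁ ⟨g1, g2, ⟨x, hx, hxF⟩, g4⟩ l₂ ⟨-, -, -, k4⟩ hlt ω hω₁ hω₂
    have hne : l₁ ≠ [] := by rintro rfl; simp at g1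
    have hpos : 0 < l₁.length := List.length_pos_iff.mpr hne
    rw [List.getLast?_eq_getElem?] at hx
    have hωx : ω (l₁.length - 1) = x := hω₁ _ _ hx
    have hidx : l₁.length - 1 < l₂.length := by omega
    have hy : l₂[l₁.length - 1]? = some (l₂[l₁.length - 1]'hidx) :=
      List.getElem?_eq_getElem hidx
    have hωy : ω (l₁.length - 1) = l₂[l₁.length - 1]'hidx := hω₂ _ _ hy
    exact k4 _ _ hy (by omega) (by rw [← hωy, hωx]; exact hxF)
  intro l₁ h₁ l₂ h₂ hne
  rw [Function.onFun, Set.disjoint_left]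
  intro ω hω₁ hω₂
  rcases lt_trichotomy l₁.length l₂.length with h | h | h
  · exact aux l₁ h₁ l₂ h₂ h ω hω₁ hω₂
  · refine hne (List.ext_getElem? fun n => ?_)
    by_cases hn : n < l₁.length
    · have e1 := hω₁ n _ (List.getElem?_eq_getElem hn)
      have e2 := hω₂ n _ (List.getElem?_eq_getElem (h ▸ hn))
      rw [List.getElem?_eq_getElem hn, List.getElem?_eq_getElem (h ▸ hn), ← e1, ← e2]
    · rw [List.getElem?_eq_none (by omega), List.getElem?_eq_none (by omega)]
  · exact (aux l₂ h₂ l₁ h₁ h ω hω₂ hω₁).elim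

end Meas

end ReachAux

open ReachAux in
/-- Let `M = (S, A, P)` be an MDP with countable state set, `π` a
stationary policy, `F ⊆ S` a target set, and `s ∈ S`.  For every horizon `T ∈ ℕ`, the
recursively defined bounded-horizon reachability probability equals the path-measure
probability of reaching `F` within `T` steps:
`ℙ^s_{M,π}(◇_{≤T} F) = ℙ^s_{M,π}({ω ∈ S^ℕ : ∃ t ≤ T, ω_t ∈ F})`, where the right-hand
side is the measure, under the Markov path measure induced by `π` and `P` from `s`
(characterized by `ν(Cyl(s_0…s_m)) = ∏_{i<m} Q(s_i, s_{i+1})` for fragments starting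
at `s`), of the set of infinite state sequences visiting `F` within the first `T`
steps. -/
theorem reachProb_eq_measure_bounded {S A : Type*} [Countable S] [MeasurableSpace S]
    [MeasurableSingletonClass S]
    (M : MDP S A) (π : S → PMF A) (F : Set S) (s : S) (T : ℕ)
    (ν : MeasureTheory.Measure (ℕ → S)) [MeasureTheory.IsProbabilityMeasure ν]
    (hcyl : ∀ l : List S, l.head? = some s →
      ν (listCyl l) = listWeight (stepKernel M π) l) :
    reachProb M π F T s = ν {ω : ℕ → S | ∃ t ≤ T, ω t ∈ F} := by
  classical
  have hF : MeasurableSet F := (Set.to_countable F).measurableSet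
  have hUm : MeasurableSet {ω : ℕ → S | ω 0 = s} := by
    rw [← listCyl_singleton]; exact measurableSet_listCyl _
  have hU : ν {ω : ℕ → S | ω 0 = s} = 1 := by
    rw [← listCyl_singleton, hcyl [s] rfl]; rfl
  have hUc : ν {ω : ℕ → S | ω 0 = s}ᶜ = 0 := (prob_compl_eq_zero_iff hUm).mpr hU
  have hsplit : ν {ω : ℕ → S | ∃ t ≤ T, ω t ∈ F}
      = ν ({ω : ℕ → S | ∃ t ≤ T, ω t ∈ F} ∩ {ω : ℕ → S | ω 0 = s}) := by
    refine le_antisymm ?_ (measure_mono Set.inter_subset_left)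
    calc ν {ω : ℕ → S | ∃ t ≤ T, ω t ∈ F}
        ≤ ν (({ω : ℕ → S | ∃ t ≤ T, ω t ∈ F} ∩ {ω : ℕ → S | ω 0 = s})
            ∪ {ω : ℕ → S | ω 0 = s}ᶜ) := by
          refine measure_mono fun ω hω => ?_
          by_cases h : ω 0 = s
          · exact Or.inl ⟨hω, h⟩
          · exact Or.inr h
      _ ≤ ν ({ω : ℕ → S | ∃ t ≤ T, ω t ∈ F} ∩ {ω : ℕ → S | ω 0 = s})
            + ν {ω : ℕ → S | ω 0 = s}ᶜ := measure_union_le _ _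
      _ = _ := by rw [hUc, add_zero]
  rw [reachProb_eq_fragSum, hsplit, ← iUnion_frag F s T,
    measure_biUnion (Set.to_countable _) (frag_pairwiseDisjoint F s T)
      (fun l _ => measurableSet_listCyl l)]
  have hterm : ∀ l : ↑(Frag F (S := S) s T), ν (listCyl (l : List S))
      = listWeight (stepKernel M π) (l : List S) := fun l => hcyl l l.2.1
  rw [tsum_congr hterm]
  exact (tsum_subtype (Frag F s T) (listWeight (stepKernel M π))).symm
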